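/- arXiv:1712.07002 — 4 statements merged into one kernel-verified Lean document; each statement's English description precedes it below -/
import Mathlib

section
/- Let r₁(k) = conj(b(conj k))/a(k) and h(k) = −conj(B(conj k))/(a(k)d(k)) with d(k) = a(k)·conj(A(conj k)) + b(k)·conj(B(conj k)), c(k) = b(k)A(k) − a(k)B(k), assuming a(k) ≠ 0 and d(k) ≠ 0 on ℝ, and assuming the global relation B(k)a(k) − A(k)b(k) = 0 and the determinant relations |a|² + |b|² = 1, |A|² + |B|² = 1 on ℝ. Then r₁(k) + h(k) = conj(c(conj k))/d(k) for k ∈ ℝ. -/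
open Complex ComplexConjugate

/-- Under the determinant relations, the global relation B a − A b = 0, and the
nonvanishing of a and d on ℝ, the spectral functions r₁ = conj(b∘conj)/a and
h = −conj(B∘conj)/(a d) satisfy r₁ + h = conj(c∘conj)/d on ℝ. -/
theorem r_decomposition
    (a b A B c d r₁ h : ℂ → ℂ)
    (hab : ∀ k : ℝ, a k * conj (a (conj (k : ℂ))) + b k * conj (b (conj (k : ℂ))) = 1)
    (hAB : ∀ k : ℝ, A k * conj (A (conj (k : ℂ))) + B k * conj (B (conj (k : ℂ))) = 1)
    (hglobal : ∀ k : ℝ, B k * a k - A k * b k = 0)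
    (hc : ∀ k : ℂ, c k = b k * A k - a k * B k)
    (hd : ∀ k : ℂ, d k = a k * conj (A (conj k)) + b k * conj (B (conj k)))
    (ha0 : ∀ k : ℝ, a k ≠ 0)
    (hd0 : ∀ k : ℝ, d k ≠ 0)
    (hr₁ : ∀ k : ℝ, r₁ k = conj (b (conj (k : ℂ))) / a k)
    (hh : ∀ k : ℝ, h k = -conj (B (conj (k : ℂ))) / (a k * d k)) :
    ∀ k : ℝ, r₁ k + h k = conj (c (conj (k : ℂ))) / d k := by
  intro k
  have hcc : conj (c (conj (k : ℂ))) =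
      conj (b (conj (k : ℂ))) * conj (A (conj (k : ℂ)))
        - conj (a (conj (k : ℂ))) * conj (B (conj (k : ℂ))) := by
    rw [hc]; simp
  have h1 := hab k
  have ha := ha0 k
  have hdk := hd0 k
  rw [hd k] at hdk
  rw [hr₁ k, hh k, hcc, hd k]
  simp only [Complex.conj_ofReal] at *
  rw [div_add_div _ _ ha (mul_ne_zero ha hdk), div_eq_div_iff (mul_ne_zero ha (mul_ne_zero ha hdk)) hdk]
  linear_combination (conj (B (k:ℂ)) * a k * (a k * conj (A (k:ℂ)) + b k * conj (B (k:ℂ)))) * h1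
end

section
/- Let r : [k₁, k₂] → ℂ be continuous. Define δ(k) = exp( (1/(2πi)) ∫_{k₁}^{k₂} ln(1 + |r(s)|²)/(s − k) ds ) for k ∈ ℂ \ [k₁, k₂]. Then δ is analytic on ℂ \ [k₁, k₂] and satisfies the symmetry δ(k) = 1 / conj(δ(conj k)) for all k ∈ ℂ \ [k₁, k₂]. -/
set_option maxHeartbeats 1000000

open Complex ComplexConjugate MeasureTheory Metric Set

/-- The function δ(k) = exp((1/(2πi)) ∫_{k₁}^{k₂} ln(1+|r(s)|²)/(s−k) ds) is
analytic on ℂ minus the segment [k₁,k₂] and satisfies δ(k) = 1/conj(δ(conj k)). -/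
theorem delta_analytic_and_symmetric
    (k₁ k₂ : ℝ) (hk : k₁ < k₂) (r : ℝ → ℂ)
    (hr : ContinuousOn r (Set.Icc k₁ k₂))
    (δ : ℂ → ℂ)
    (hδ : ∀ k : ℂ, k ∉ (Complex.ofReal '' Set.Icc k₁ k₂) →
      δ k = Complex.exp ((1 / (2 * Real.pi * Complex.I)) *
        ∫ s in k₁..k₂, (Real.log (1 + ‖r s‖ ^ 2) : ℂ) / ((s : ℂ) - k))) :
    AnalyticOn ℂ δ ((Complex.ofReal '' Set.Icc k₁ k₂)ᶜ) ∧
    ∀ k : ℂ, k ∉ (Complex.ofReal '' Set.Icc k₁ k₂) →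
      δ k = 1 / conj (δ (conj k)) := by
  set S : Set ℂ := Complex.ofReal '' Set.Icc k₁ k₂ with hS
  set g : ℝ → ℂ := fun s => ((Real.log (1 + ‖r s‖ ^ 2) : ℝ) : ℂ) with hg
  set c : ℂ := 1 / (2 * Real.pi * Complex.I) with hc
  set F : ℂ → ℂ := fun k => ∫ s in k₁..k₂, g s / ((s : ℂ) - k) with hF
  have hSne : S.Nonempty := ⟨(k₁ : ℂ), k₁, ⟨le_refl _, hk.le⟩, rfl⟩
  have hSclosed : IsClosed S :=
    ((isCompact_Icc).image Complex.continuous_ofReal).isClosed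
  have hSopen : IsOpen Sᶜ := hSclosed.isOpen_compl
  -- continuity of g on Icc
  have hgc : ContinuousOn g (Set.Icc k₁ k₂) := by
    apply Complex.continuous_ofReal.comp_continuousOn
    apply ContinuousOn.log
    · exact continuousOn_const.add ((continuous_norm.comp_continuousOn hr).pow 2)
    · intro x hx
      positivity
  -- bound on g
  obtain ⟨M, hM⟩ := (isCompact_Icc).exists_bound_of_continuousOn hgc
  -- nonvanishing of denominators
  have hne : ∀ k : ℂ, k ∉ S → ∀ s ∈ Set.Icc k₁ k₂, (s : ℂ) - k ≠ 0 := by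
    intro k hkS s hs h
    exact hkS ⟨s, hs, sub_eq_zero.mp h⟩
  -- the integrand is interval integrable
  have hint : ∀ k : ℂ, k ∉ S →
      IntervalIntegrable (fun s => g s / ((s : ℂ) - k)) volume k₁ k₂ := by
    intro k hkS
    apply ContinuousOn.intervalIntegrable
    rw [Set.uIcc_of_le hk.le]
    exact hgc.div (Complex.continuous_ofReal.continuousOn.sub continuousOn_const)
      (hne k hkS)
  -- F has a derivative at each point of Sᶜ
  have hFd : ∀ k₀ ∈ Sᶜ, HasDerivAt F (∫ s in k₁..k₂, g s / ((s : ℂ) - k₀) ^ 2) k₀ := by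
    intro k₀ hk₀
    have hd : 0 < infDist k₀ S := (hSclosed.notMem_iff_infDist_pos hSne).mp hk₀
    set ε : ℝ := infDist k₀ S / 2 with hε
    have hεpos : 0 < ε := by positivity
    -- points in the ball stay away from the segment
    have hball : ∀ x ∈ ball k₀ ε, ∀ s ∈ Set.Icc k₁ k₂, ε ≤ ‖(s : ℂ) - x‖ := by
      intro x hx s hs
      have h1 : infDist k₀ S ≤ dist k₀ ((s : ℂ)) := infDist_le_dist_of_mem ⟨s, hs, rfl⟩
      have h2 : dist k₀ ((s : ℂ)) ≤ dist k₀ x + dist x ((s : ℂ)) := dist_triangle _ _ _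
      have h3 : dist k₀ x < ε := mem_ball'.mp hx
      have : ε ≤ dist x ((s : ℂ)) := by
        have : infDist k₀ S = 2 * ε := by rw [hε]; ring
        linarith
      calc ε ≤ dist x ((s : ℂ)) := this
        _ = ‖(s : ℂ) - x‖ := by rw [dist_eq_norm]; rw [norm_sub_rev]
    have hball_ne : ∀ x ∈ ball k₀ ε, ∀ s ∈ Set.Icc k₁ k₂, (s : ℂ) - x ≠ 0 := by
      intro x hx s hs h
      have := hball x hx s hs
      rw [h, norm_zero] at this
      linarith
    have hIcc_sub : Set.uIoc k₁ k₂ ⊆ Set.Icc k₁ k₂ := by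
      rw [Set.uIoc_of_le hk.le]; exact Set.Ioc_subset_Icc_self
    have hmeas : ∀ x : ℂ, x ∉ S → AEStronglyMeasurable (fun s => g s / ((s : ℂ) - x))
        (volume.restrict (Set.uIoc k₁ k₂)) := by
      intro x hx
      apply ContinuousOn.aestronglyMeasurable _ measurableSet_uIoc
      exact (hgc.mono hIcc_sub).div
        ((Complex.continuous_ofReal.continuousOn.sub continuousOn_const).mono hIcc_sub)
        (fun s hs => hne x hx s (hIcc_sub hs))
    have hball_sub : ball k₀ ε ⊆ Sᶜ := by
      intro x hx hxS
      have h1 : infDist k₀ S ≤ dist k₀ x := infDist_le_dist_of_mem hxS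
      have h3 : dist k₀ x < ε := mem_ball'.mp hx
      have : infDist k₀ S = 2 * ε := by rw [hε]; ring
      linarith
    have hbound : ∀ᵐ t ∂(volume : Measure ℝ), t ∈ Set.uIoc k₁ k₂ →
        ∀ x ∈ ball k₀ ε, ‖g t / ((t : ℂ) - x) ^ 2‖ ≤ M / ε ^ 2 := by
      filter_upwards with s hs x hx
      have hsI := hIcc_sub hs
      have h1 : ε ≤ ‖(s : ℂ) - x‖ := hball x hx s hsI
      rw [norm_div, norm_pow]
      apply div_le_div₀ (le_trans (norm_nonneg _) (hM s hsI)) (hM s hsI)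
        (by positivity)
      exact pow_le_pow_left₀ hεpos.le h1 2
    have hdiff' : ∀ᵐ t ∂(volume : Measure ℝ), t ∈ Set.uIoc k₁ k₂ →
        ∀ x ∈ ball k₀ ε, HasDerivAt (fun y : ℂ => g t / ((t : ℂ) - y))
          (g t / ((t : ℂ) - x) ^ 2) x := by
      filter_upwards with s hs x hx
      have hsI := hIcc_sub hs
      have hne' : (s : ℂ) - x ≠ 0 := hball_ne x hx s hsI
      have h1 : HasDerivAt (fun y : ℂ => (s : ℂ) - y) (-1) x := by
        simpa using (hasDerivAt_id x).const_sub (s : ℂ)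
      have h2 := (h1.inv hne').const_mul (g s)
      simpa [div_eq_mul_inv, neg_neg] using h2
    have hmeas2 : AEStronglyMeasurable (fun s => g s / ((s : ℂ) - k₀) ^ 2)
        (volume.restrict (Set.uIoc k₁ k₂)) := by
      apply ContinuousOn.aestronglyMeasurable _ measurableSet_uIoc
      exact (hgc.mono hIcc_sub).div
        (((Complex.continuous_ofReal.continuousOn.sub continuousOn_const).pow 2).mono hIcc_sub)
        (fun s hs => pow_ne_zero 2 (hne k₀ hk₀ s (hIcc_sub hs)))
    have hmeas' : ∀ᶠ x in nhds k₀, AEStronglyMeasurable (fun s => g s / ((s : ℂ) - x))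
        (volume.restrict (Set.uIoc k₁ k₂)) :=
      Filter.eventually_of_mem (ball_mem_nhds k₀ hεpos)
        (fun x hx => hmeas x (hball_sub hx))
    exact (intervalIntegral.hasDerivAt_integral_of_dominated_loc_of_deriv_le
      (𝕜 := ℂ) (μ := volume) (a := k₁) (b := k₂)
      (F := fun x s => g s / ((s : ℂ) - x)) (F' := fun x s => g s / ((s : ℂ) - x) ^ 2)
      (bound := fun _ => M / ε ^ 2) (x₀ := k₀)
      (ball_mem_nhds k₀ hεpos) hmeas' (hint k₀ hk₀) hmeas2 hbound intervalIntegrable_const hdiff').2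
  -- analyticity
  have hdiff : DifferentiableOn ℂ (fun k => Complex.exp (c * F k)) Sᶜ := by
    intro k hkS
    exact (((hFd k hkS).const_mul c).cexp).differentiableAt.differentiableWithinAt
  have hEq : Set.EqOn δ (fun k => Complex.exp (c * F k)) Sᶜ := fun k hkS => hδ k hkS
  refine ⟨(hdiff.congr hEq).analyticOn hSopen, ?_⟩
  -- symmetry
  intro k hkS
  have hconjS : conj k ∉ S := by
    intro h
    obtain ⟨s, hs, hsk⟩ := h
    exact hkS ⟨s, hs, by rw [← Complex.conj_conj k, ← hsk, Complex.conj_ofReal]⟩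
  rw [hδ k hkS, hδ (conj k) hconjS, ← Complex.exp_conj]
  have hconjint : conj (∫ s in k₁..k₂, g s / ((s : ℂ) - conj k)) =
      ∫ s in k₁..k₂, g s / ((s : ℂ) - k) := by
    rw [intervalIntegral.integral_of_le hk.le, intervalIntegral.integral_of_le hk.le,
      ← integral_conj]
    congr 1
    ext s
    simp [hg, map_div₀, Complex.conj_ofReal]
  have hcconj : conj c = -c := by
    rw [hc]
    simp only [map_div₀, map_one, map_mul, Complex.conj_ofReal, Complex.conj_I, map_ofNat]
    rw [mul_neg, div_neg]
  rw [map_mul, hcconj, hconjint, neg_mul, Complex.exp_neg, one_div, inv_inv]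
end

section
/- Let f be integrable and real-valued on [k₁,k₂] with k₁ < k₂. Define δ(k) = exp((1/(2πi)) ∫_{k₁}^{k₂} f(s)/(s−k) ds) for k off the segment. Then |δ(k)| and |δ(k)⁻¹| are uniformly bounded on ℂ \ [k₁, k₂]: there is C > 0 (depending on f) with C⁻¹ ≤ |δ(k)| ≤ C for all such k. -/
open Complex

open MeasureTheory Real in
/-- Key estimate: the Poisson-kernel type integral is bounded by π. -/
lemma poisson_integral_le_pi (k₁ k₂ a b : ℝ) (hb : b ≠ 0) :
    ∫ s in k₁..k₂, |b| / ((s - a) ^ 2 + b ^ 2) ≤ Real.pi := by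
  have hc : (0:ℝ) < |b| := abs_pos.mpr hb
  have heq : ∀ s : ℝ, |b| / ((s - a) ^ 2 + b ^ 2)
      = |b|⁻¹ * (1 + (s / |b| - a / |b|) ^ 2)⁻¹ := by
    intro s
    have h1 : (s / |b| - a / |b|) = (s - a) / |b| := by ring
    have h2 : ((s - a) ^ 2 + b ^ 2) ≠ 0 := by positivity
    rw [h1, div_pow, _root_.sq_abs]
    field_simp
    linear_combination (b ^ 2 - 2 * s * a + s ^ 2 + a ^ 2) * _root_.sq_abs b
  rw [intervalIntegral.integral_congr (fun s _ => heq s)]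
  rw [intervalIntegral.integral_const_mul]
  have hcomp := intervalIntegral.integral_comp_div_sub
    (f := fun x : ℝ => (1 + x ^ 2)⁻¹) (a := k₁) (b := k₂) (c := |b|) hc.ne' (a / |b|)
  rw [hcomp, integral_inv_one_add_sq, smul_eq_mul]
  rw [← mul_assoc, inv_mul_cancel₀ hc.ne', one_mul]
  have h1 := Real.arctan_lt_pi_div_two (k₂ / |b| - a / |b|)
  have h2 := Real.neg_pi_div_two_lt_arctan (k₁ / |b| - a / |b|)
  linarith

/-- For f real-valued, integrable and bounded on [k₁,k₂], the function
δ(k) = exp((1/(2πi)) ∫_{k₁}^{k₂} f(s)/(s−k) ds) and its inverse are uniformly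
bounded off the segment: C⁻¹ ≤ |δ(k)| ≤ C. -/
theorem delta_uniformly_bounded
    (k₁ k₂ : ℝ) (hk : k₁ < k₂) (f : ℝ → ℝ)
    (hint : IntervalIntegrable f MeasureTheory.volume k₁ k₂)
    (M : ℝ) (hbd : ∀ s ∈ Set.Icc k₁ k₂, |f s| ≤ M)
    (δ : ℂ → ℂ)
    (hδ : ∀ k : ℂ, k ∉ (Complex.ofReal '' Set.Icc k₁ k₂) →
      δ k = Complex.exp ((1 / (2 * Real.pi * Complex.I)) *
        ∫ s in k₁..k₂, (f s : ℂ) / ((s : ℂ) - k))) :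
    ∃ C : ℝ, 0 < C ∧ ∀ k : ℂ, k ∉ (Complex.ofReal '' Set.Icc k₁ k₂) →
      C⁻¹ ≤ ‖δ k‖ ∧ ‖δ k‖ ≤ C := by
  have hM0 : 0 ≤ M := le_trans (abs_nonneg _) (hbd k₁ ⟨le_rfl, hk.le⟩)
  have hπ : (0:ℝ) < Real.pi := Real.pi_pos
  refine ⟨Real.exp (M / 2), Real.exp_pos _, fun k hkmem => ?_⟩
  set a := k.re with ha
  set b := k.im with hb
  have huIcc : Set.uIcc k₁ k₂ = Set.Icc k₁ k₂ := Set.uIcc_of_le hk.le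
  have hne : ∀ s ∈ Set.uIcc k₁ k₂, (s:ℂ) - k ≠ 0 := by
    intro s hs h0
    exact hkmem ⟨s, huIcc ▸ hs, sub_eq_zero.mp h0⟩
  -- integrability of the complex integrand
  have hfC : IntervalIntegrable (fun s => (f s : ℂ)) MeasureTheory.volume k₁ k₂ :=
    ⟨hint.1.ofReal, hint.2.ofReal⟩
  have hcont : ContinuousOn (fun s : ℝ => ((s:ℂ) - k)⁻¹) (Set.uIcc k₁ k₂) := by
    apply ContinuousOn.inv₀
    · exact (continuous_ofReal.continuousOn).sub continuousOn_const
    · exact hne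
  have hIint : IntervalIntegrable (fun s => (f s : ℂ) / ((s:ℂ) - k))
      MeasureTheory.volume k₁ k₂ := by
    simp_rw [div_eq_mul_inv]
    exact hfC.mul_continuousOn hcont
  -- imaginary part of the integrand
  have him_pt : ∀ s : ℝ, ((f s : ℂ) / ((s:ℂ) - k)).im
      = f s * b / ((s - a) ^ 2 + b ^ 2) := by
    intro s
    rw [Complex.div_im]
    simp [Complex.normSq_apply, ← hb, ← ha]
    ring_nf
  have him : (∫ s in k₁..k₂, (f s : ℂ) / ((s:ℂ) - k)).im
      = ∫ s in k₁..k₂, f s * b / ((s - a) ^ 2 + b ^ 2) := by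
    have := Complex.imCLM.intervalIntegral_comp_comm hIint
    simp only [Complex.imCLM_apply] at this
    rw [← this]
    exact intervalIntegral.integral_congr (fun s _ => him_pt s)
  -- bound |im integral| ≤ M * π
  have hbound : |(∫ s in k₁..k₂, (f s : ℂ) / ((s:ℂ) - k)).im| ≤ M * Real.pi := by
    rw [him]
    by_cases hb0 : b = 0
    · simp [hb0]
      positivity
    · have hd : ∀ s : ℝ, (0:ℝ) < (s - a) ^ 2 + b ^ 2 := by
        intro s; positivity
      have habs : |∫ s in k₁..k₂, f s * b / ((s - a) ^ 2 + b ^ 2)|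
          ≤ ∫ s in k₁..k₂, |f s * b / ((s - a) ^ 2 + b ^ 2)| :=
        intervalIntegral.abs_integral_le_integral_abs hk.le
      have hcont2 : ContinuousOn (fun s : ℝ => b / ((s - a) ^ 2 + b ^ 2))
          (Set.uIcc k₁ k₂) := by
        apply ContinuousOn.div continuousOn_const
        · fun_prop
        · intro s _; exact (hd s).ne'
      have hint2 : IntervalIntegrable (fun s => f s * b / ((s - a) ^ 2 + b ^ 2))
          MeasureTheory.volume k₁ k₂ := by
        simp_rw [mul_div_assoc]
        exact hint.mul_continuousOn hcont2
      have hint2a : IntervalIntegrable (fun s => |f s * b / ((s - a) ^ 2 + b ^ 2)|)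
          MeasureTheory.volume k₁ k₂ := hint2.abs
      have hint3 : IntervalIntegrable (fun s => M * (|b| / ((s - a) ^ 2 + b ^ 2)))
          MeasureTheory.volume k₁ k₂ := by
        apply Continuous.intervalIntegrable
        apply Continuous.mul continuous_const
        apply Continuous.div continuous_const (by fun_prop)
        intro s; exact (hd s).ne'
      have hmono : ∫ s in k₁..k₂, |f s * b / ((s - a) ^ 2 + b ^ 2)|
          ≤ ∫ s in k₁..k₂, M * (|b| / ((s - a) ^ 2 + b ^ 2)) := by
        apply intervalIntegral.integral_mono_on hk.le hint2a hint3
        intro s hs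
        rw [abs_div, abs_mul, abs_of_pos (hd s), mul_div_assoc]
        apply mul_le_mul_of_nonneg_right (hbd s hs)
        positivity
      have hle : ∫ s in k₁..k₂, M * (|b| / ((s - a) ^ 2 + b ^ 2)) ≤ M * Real.pi := by
        rw [intervalIntegral.integral_const_mul]
        exact mul_le_mul_of_nonneg_left (poisson_integral_le_pi k₁ k₂ a b hb0) hM0
      linarith [habs, hmono, hle]
  -- real part of the exponent
  have hcoef : (1 / (2 * (Real.pi:ℂ) * Complex.I)) = ⟨0, -(1 / (2 * Real.pi))⟩ := by
    rw [Complex.ext_iff]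
    constructor <;>
      simp [Complex.div_re, Complex.div_im, Complex.normSq_apply]
  set I0 : ℂ := ∫ s in k₁..k₂, (f s : ℂ) / ((s:ℂ) - k) with hI0
  have hre : ((1 / (2 * (Real.pi:ℂ) * Complex.I)) * I0).re = I0.im / (2 * Real.pi) := by
    rw [hcoef, Complex.mul_re]
    simp
    ring
  have hre_bound : |((1 / (2 * (Real.pi:ℂ) * Complex.I)) * I0).re| ≤ M / 2 := by
    rw [hre, abs_div, abs_of_pos (by positivity : (0:ℝ) < 2 * Real.pi)]
    rw [div_le_div_iff₀ (by positivity) two_pos]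
    calc |I0.im| * 2 ≤ M * Real.pi * 2 := by
          have := hbound; nlinarith [abs_nonneg I0.im]
      _ ≤ M * (2 * Real.pi) := by ring_nf; rfl
  -- conclude
  rw [hδ k hkmem]
  rw [Complex.norm_exp]
  have h1 : ((1 / (2 * (Real.pi:ℂ) * Complex.I)) * I0).re ≤ M / 2 :=
    (abs_le.mp hre_bound).2
  have h2 : -(M / 2) ≤ ((1 / (2 * (Real.pi:ℂ) * Complex.I)) * I0).re :=
    (abs_le.mp hre_bound).1
  constructor
  · rw [← Real.exp_neg]
    exact Real.exp_le_exp.mpr h2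
  · exact Real.exp_le_exp.mpr h1
end

section
/- Let β > 0, ξ ≥ 0 with ξ < α²/(3β), α > 0, and let k₂ be the stationary point with α + 6βk₂ = √(α²−3βξ). For k = k₂ + u e^{iπ/4} with u > 0, the real part of Φ(k) = 2i(kξ + 4βk³ + 2αk²) equals Re Φ(k) = −4u²(√2 β u + √(α² − 3βξ)). In particular Re Φ(k) < 0 for all u > 0. -/
open Complex

/-- Signature computation: along the ray k = k₂ + u e^{iπ/4}, u > 0, the real part
of Φ(k) = 2i(kξ + 4βk³ + 2αk²) equals −4u²(√2 βu + √(α²−3βξ)), which is negative. -/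
theorem re_phase_on_ray
    (α β ξ : ℝ) (hα : 0 < α) (hβ : 0 < β) (hξ0 : 0 ≤ ξ) (hξ : ξ < α ^ 2 / (3 * β))
    (k₂ : ℝ) (hk₂ : k₂ = (-α + Real.sqrt (α ^ 2 - 3 * β * ξ)) / (6 * β))
    (Φ : ℂ → ℂ)
    (hΦ : ∀ k : ℂ, Φ k = 2 * Complex.I *
      (k * (ξ : ℂ) + 4 * (β : ℂ) * k ^ 3 + 2 * (α : ℂ) * k ^ 2)) :
    ∀ u : ℝ, 0 < u →
      (Φ ((k₂ : ℂ) + (u : ℂ) * Complex.exp (Complex.I * (Real.pi / 4)))).re =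
        -4 * u ^ 2 * (Real.sqrt 2 * β * u + Real.sqrt (α ^ 2 - 3 * β * ξ)) ∧
      (Φ ((k₂ : ℂ) + (u : ℂ) * Complex.exp (Complex.I * (Real.pi / 4)))).re < 0 := by
  intro u hu
  have hpos : 0 < α ^ 2 - 3 * β * ξ := by
    have h3β : 0 < 3 * β := by positivity
    have := (lt_div_iff₀ h3β).mp hξ
    nlinarith
  set s := Real.sqrt (α ^ 2 - 3 * β * ξ) with hs
  have hs2 : s ^ 2 = α ^ 2 - 3 * β * ξ := Real.sq_sqrt hpos.le
  have hs0 : 0 < s := Real.sqrt_pos.mpr hpos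
  have h2 : Real.sqrt 2 ^ 2 = 2 := Real.sq_sqrt (by norm_num)
  have h20 : 0 < Real.sqrt 2 := Real.sqrt_pos.mpr (by norm_num)
  have hks : α + 6 * β * k₂ = s := by
    rw [hk₂]; field_simp; ring
  have hstat : ξ + 12 * β * k₂ ^ 2 + 4 * α * k₂ = 0 := by
    rw [hk₂]; field_simp; nlinarith [hs2]
  have hexp : Complex.exp (Complex.I * (Real.pi / 4)) =
      ((Real.sqrt 2 / 2 : ℝ) : ℂ) + ((Real.sqrt 2 / 2 : ℝ) : ℂ) * Complex.I := by
    rw [mul_comm, show ((Real.pi : ℂ) / 4) = ((Real.pi / 4 : ℝ) : ℂ) by push_cast; ring,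
      Complex.exp_mul_I, ← Complex.ofReal_cos, ← Complex.ofReal_sin,
      Real.cos_pi_div_four, Real.sin_pi_div_four]
  set v : ℝ := Real.sqrt 2 / 2 * u with hv
  have hre : (Φ ((k₂ : ℂ) + (u : ℂ) * Complex.exp (Complex.I * (Real.pi / 4)))).re =
      -2 * v * (ξ + 12 * β * (k₂ + v) ^ 2 - 4 * β * v ^ 2 + 4 * α * (k₂ + v)) := by
    rw [hΦ, hexp]
    simp [Complex.add_re, Complex.add_im, Complex.mul_re, Complex.mul_im,
      Complex.I_re, Complex.I_im, Complex.ofReal_re, Complex.ofReal_im, pow_succ]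
    ring
  have key : (Φ ((k₂ : ℂ) + (u : ℂ) * Complex.exp (Complex.I * (Real.pi / 4)))).re =
      -4 * u ^ 2 * (Real.sqrt 2 * β * u + s) := by
    rw [hre]
    have expand : ξ + 12 * β * (k₂ + v) ^ 2 - 4 * β * v ^ 2 + 4 * α * (k₂ + v)
        = (ξ + 12 * β * k₂ ^ 2 + 4 * α * k₂) + 8 * β * v ^ 2 + 4 * v * (α + 6 * β * k₂) := by
      ring
    rw [expand, hstat, hks, hv]
    have hv2 : (Real.sqrt 2 / 2 * u) ^ 2 = u ^ 2 / 2 := by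
      rw [mul_pow, div_pow, h2]; ring
    linear_combination (-2 * β * u ^ 3 * Real.sqrt 2 - 2 * u ^ 2 * s) * h2
  refine ⟨key, ?_⟩
  rw [key]
  have h : 0 < Real.sqrt 2 * β * u + s := by positivity
  nlinarith [mul_pos (pow_pos hu 2) h]
end
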